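/- For every tree T on n ≥ 2 vertices, F(T∘K_1) = Σ_S 2^{|S|} + n and F*(T∘K_1) = Σ_S (2^{|S|} - 1) + n, where both sums range over all subtrees S of T and |S| denotes the number of vertices of S. -/

import Mathlib

open SimpleGraph

/-- A subtree of a graph `G` is a nonempty set of vertices inducing a connected subgraph. -/
def IsSubtree {V : Type} (G : SimpleGraph V) (s : Finset V) : Prop :=
  s.Nonempty ∧ (G.induce (s : Set V)).Connected

/-- `F(G)`: the number of subtrees of `G`. -/
noncomputable def numSubtrees {V : Type} (G : SimpleGraph V) : ℕ :=
  {s : Finset V | IsSubtree G s}.ncard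

/-- A leaf is a vertex of degree 1. -/
def IsLeaf {V : Type} (G : SimpleGraph V) (v : V) : Prop :=
  (G.neighborSet v).ncard = 1

/-- `F*(G)`: the number of subtrees of `G` containing at least one leaf of `G`. -/
noncomputable def numLeafSubtrees {V : Type} (G : SimpleGraph V) : ℕ :=
  {s : Finset V | IsSubtree G s ∧ ∃ v ∈ s, IsLeaf G v}.ncard

/-- `f_G(v)`: the number of subtrees of `G` containing the vertex `v`. -/
noncomputable def numSubtreesContaining {V : Type} (G : SimpleGraph V) (v : V) : ℕ :=
  {s : Finset V | IsSubtree G s ∧ v ∈ s}.ncard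

/-- `f*_G(v)`: the number of subtrees of `G` containing `v` and at least one leaf of `G`
different from `v`. -/
noncomputable def numLeafSubtreesContaining {V : Type} (G : SimpleGraph V) (v : V) : ℕ :=
  {s : Finset V | IsSubtree G s ∧ v ∈ s ∧ ∃ w ∈ s, w ≠ v ∧ IsLeaf G w}.ncard

/-- A finite set of edges of `G` that are pairwise non-incident. -/
def IsMatchingSet {V : Type} (G : SimpleGraph V) (M : Finset (Sym2 V)) : Prop :=
  (M : Set (Sym2 V)) ⊆ G.edgeSet ∧
    ∀ e ∈ M, ∀ f ∈ M, e ≠ f → ∀ v : V, ¬(v ∈ e ∧ v ∈ f)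

/-- The matching number: the maximum size of a set of pairwise non-incident edges. -/
noncomputable def matchingNumber {V : Type} (G : SimpleGraph V) : ℕ :=
  sSup {k | ∃ M : Finset (Sym2 V), IsMatchingSet G M ∧ M.card = k}

/-- `G` has a perfect matching: pairwise non-incident edges covering every vertex. -/
def HasPerfectMatching {V : Type} (G : SimpleGraph V) : Prop :=
  ∃ M : Finset (Sym2 V), IsMatchingSet G M ∧ ∀ v : V, ∃ e ∈ M, v ∈ e

/-- A dominating set: every vertex outside `S` has a neighbour in `S`. -/
def IsDominating {V : Type} (G : SimpleGraph V) (S : Set V) : Prop :=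
  ∀ v : V, v ∉ S → ∃ u ∈ S, G.Adj u v

/-- The domination number: the minimum size of a dominating set. -/
noncomputable def dominationNumber {V : Type} (G : SimpleGraph V) : ℕ :=
  sInf {k | ∃ S : Finset V, IsDominating G (S : Set V) ∧ S.card = k}

/-- The tree `A(n,q)`: a center vertex adjacent to `n - 2q + 1` leaves and to the
midpoints of `q - 1` pendant paths of length 2. -/
def treeA (n q : ℕ) : SimpleGraph (Unit ⊕ Fin (n - 2 * q + 1) ⊕ Fin (q - 1) ⊕ Fin (q - 1)) :=
  SimpleGraph.fromRel fun x y =>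
    match x, y with
    | Sum.inl _, Sum.inr (Sum.inl _) => True
    | Sum.inl _, Sum.inr (Sum.inr (Sum.inl _)) => True
    | Sum.inr (Sum.inr (Sum.inl i)), Sum.inr (Sum.inr (Sum.inr j)) => i = j
    | _, _ => False

/-- The corona `G ∘ K₁`: attach one new pendant vertex to each vertex of `G`. -/
def corona {V : Type} (G : SimpleGraph V) : SimpleGraph (V ⊕ V) :=
  SimpleGraph.fromRel fun x y =>
    match x, y with
    | Sum.inl a, Sum.inl b => G.Adj a b
    | Sum.inl a, Sum.inr b => a = b
    | _, _ => False

/-- `P₄(1^a, 1^b)`: a path on 4 vertices with `a` pendant vertices attached to one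
endvertex and `b` pendant vertices attached to the other endvertex. -/
def treeP4 (a b : ℕ) : SimpleGraph (Fin 4 ⊕ Fin a ⊕ Fin b) :=
  SimpleGraph.fromRel fun x y =>
    match x, y with
    | Sum.inl i, Sum.inl j => (j : ℕ) = (i : ℕ) + 1
    | Sum.inl i, Sum.inr (Sum.inl _) => i = 0
    | Sum.inl i, Sum.inr (Sum.inr _) => i = 3
    | _, _ => False

/-- The broom `T_{n,Δ}`: a path on `n - Δ + 1` vertices with `Δ - 1` pendant vertices
attached to one endvertex. -/
def broom (n Δ : ℕ) : SimpleGraph (Fin (n - Δ + 1) ⊕ Fin (Δ - 1)) :=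
  SimpleGraph.fromRel fun x y =>
    match x, y with
    | Sum.inl i, Sum.inl j => (j : ℕ) = (i : ℕ) + 1
    | Sum.inl i, Sum.inr _ => (i : ℕ) = 0
    | _, _ => False

/-- `T'_{n,Δ}`: a path on `n - 2Δ + 3` vertices with `Δ - 2` pendant paths of length 2
and one pendant edge attached to one endvertex of the path. -/
def treeT' (n Δ : ℕ) :
    SimpleGraph (Fin (n - 2 * Δ + 3) ⊕ Fin (Δ - 2) ⊕ Fin (Δ - 2) ⊕ Unit) :=
  SimpleGraph.fromRel fun x y =>
    match x, y with
    | Sum.inl i, Sum.inl j => (j : ℕ) = (i : ℕ) + 1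
    | Sum.inl i, Sum.inr (Sum.inl _) => (i : ℕ) = 0
    | Sum.inr (Sum.inl i), Sum.inr (Sum.inr (Sum.inl j)) => i = j
    | Sum.inl i, Sum.inr (Sum.inr (Sum.inr _)) => (i : ℕ) = 0
    | _, _ => False

/-- The spider with `i` legs of length `l` and `j` legs of length `L`. -/
def spider (i l j L : ℕ) : SimpleGraph (Unit ⊕ (Fin i × Fin l) ⊕ (Fin j × Fin L)) :=
  SimpleGraph.fromRel fun x y =>
    match x, y with
    | Sum.inl _, Sum.inr (Sum.inl (_, t)) => (t : ℕ) = 0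
    | Sum.inl _, Sum.inr (Sum.inr (_, t)) => (t : ℕ) = 0
    | Sum.inr (Sum.inl (a, s)), Sum.inr (Sum.inl (b, t)) => a = b ∧ (t : ℕ) = (s : ℕ) + 1
    | Sum.inr (Sum.inr (a, s)), Sum.inr (Sum.inr (b, t)) => a = b ∧ (t : ℕ) = (s : ℕ) + 1
    | _, _ => False

/-- `Ť_{n,k}^d`: a path `v_1 v_2 … v_{d+1}` on `d + 1` vertices with `n - d - 1`
pendant vertices attached to the vertex `v_k` (`1 ≤ k ≤ d + 1`). -/
def treeHat (n d k : ℕ) : SimpleGraph (Fin (d + 1) ⊕ Fin (n - d - 1)) :=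
  SimpleGraph.fromRel fun x y =>
    match x, y with
    | Sum.inl i, Sum.inl j => (j : ℕ) = (i : ℕ) + 1
    | Sum.inl i, Sum.inr _ => (i : ℕ) + 1 = k
    | _, _ => False

/-- The tree obtained from the disjoint union of `T` and a rooted tree `X` by
identifying the root `u` of `X` with the vertex `x` of `T`. -/
def graft {A B : Type} (T : SimpleGraph A) (X : SimpleGraph B) (x : A) (u : B) :
    SimpleGraph (A ⊕ {b : B // b ≠ u}) :=
  SimpleGraph.fromRel fun p q =>
    match p, q with
    | Sum.inl a, Sum.inl b => T.Adj a b
    | Sum.inr a, Sum.inr b => X.Adj (a : B) (b : B)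
    | Sum.inl a, Sum.inr b => a = x ∧ X.Adj u (b : B)
    | Sum.inr _, Sum.inl _ => False

/-- The tree obtained from the disjoint union of `G` and `H` by adding the edge `uv`. -/
def joinByEdge {A B : Type} (G : SimpleGraph A) (H : SimpleGraph B) (u : A) (v : B) :
    SimpleGraph (A ⊕ B) :=
  SimpleGraph.fromRel fun p q =>
    match p, q with
    | Sum.inl a, Sum.inl b => G.Adj a b
    | Sum.inr a, Sum.inr b => H.Adj a b
    | Sum.inl a, Sum.inr b => a = u ∧ b = v
    | Sum.inr _, Sum.inl _ => False

/-- The graph obtained from `G` by attaching one new pendant vertex to `x`. -/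
def attachPendant {A : Type} (G : SimpleGraph A) (x : A) : SimpleGraph (A ⊕ Unit) :=
  SimpleGraph.fromRel fun p q =>
    match p, q with
    | Sum.inl a, Sum.inl b => G.Adj a b
    | Sum.inl a, Sum.inr _ => a = x
    | _, _ => False

section CoronaAux
variable {V : Type} (G : SimpleGraph V)

lemma corona_adj_inl_inl (a b : V) : (corona G).Adj (Sum.inl a) (Sum.inl b) ↔ G.Adj a b := by
  simp only [corona, fromRel_adj]
  constructor
  · rintro ⟨-, h | h⟩
    · exact h
    · exact h.symm
  · intro h
    exact ⟨by simp [G.ne_of_adj h], Or.inl h⟩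

lemma corona_adj_inl_inr (a b : V) : (corona G).Adj (Sum.inl a) (Sum.inr b) ↔ a = b := by
  simp only [corona, fromRel_adj]
  constructor
  · rintro ⟨-, h | h⟩
    · exact h
    · exact h.elim
  · rintro rfl
    exact ⟨by simp, Or.inl rfl⟩

lemma corona_adj_inr (a : V) (y : V ⊕ V) : (corona G).Adj (Sum.inr a) y ↔ y = Sum.inl a := by
  cases y with
  | inl b =>
    rw [adj_comm, corona_adj_inl_inr]
    constructor
    · rintro rfl; rfl
    · intro h; simpa using h
  | inr b =>
    simp only [corona, fromRel_adj]
    constructor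
    · rintro ⟨-, h | h⟩ <;> exact h.elim
    · rintro h; exact absurd h (by simp)

/-- embed a pair of finsets into V ⊕ V -/
def emb (A B : Finset V) : Finset (V ⊕ V) :=
  Finset.disjUnion (A.map ⟨Sum.inl, Sum.inl_injective⟩) (B.map ⟨Sum.inr, Sum.inr_injective⟩)
    (by simp [Finset.disjoint_left])

@[simp] lemma mem_emb_inl {A B : Finset V} {a : V} : Sum.inl a ∈ emb A B ↔ a ∈ A := by
  simp [emb]

@[simp] lemma mem_emb_inr {A B : Finset V} {b : V} : Sum.inr b ∈ emb A B ↔ b ∈ B := by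
  simp [emb]

lemma emb_injective : Function.Injective (fun p : Finset V × Finset V => emb p.1 p.2) := by
  rintro ⟨A, B⟩ ⟨A', B'⟩ h
  have h : emb A B = emb A' B' := h
  simp only [Prod.mk.injEq]
  constructor
  · ext a; rw [← mem_emb_inl (B := B), h, mem_emb_inl]
  · ext b; rw [← mem_emb_inr (A := A), h, mem_emb_inr]

/-- If `inr a ∈ s` and `s` is connected with another vertex, then `inl a ∈ s`. -/
lemma inl_mem_of_reach {s : Finset (V ⊕ V)} {a : V} {x : V ⊕ V}
    (ha : Sum.inr a ∈ (s : Set (V ⊕ V))) (hx : x ∈ (s : Set (V ⊕ V)))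
    (h : ((corona G).induce (s : Set (V ⊕ V))).Reachable ⟨Sum.inr a, ha⟩ ⟨x, hx⟩)
    (hne : x ≠ Sum.inr a) : Sum.inl a ∈ s := by
  obtain ⟨w⟩ := h
  cases w with
  | nil => exact absurd rfl hne
  | cons h p =>
    rename_i y
    have : (corona G).Adj (Sum.inr a) (y : V ⊕ V) := h
    rw [corona_adj_inr] at this
    have hy := y.2
    rw [this] at hy
    exact hy

lemma reach_proj {s : Finset (V ⊕ V)} {A : Finset V}
    (hA : ∀ b : V, Sum.inl b ∈ s → b ∈ A)
    {x y : ↑(s : Set (V ⊕ V))} (w : ((corona G).induce (s : Set (V ⊕ V))).Walk x y)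
    (hx : Sum.elim id id (x : V ⊕ V) ∈ (A : Set V)) :
    ∃ hy : Sum.elim id id (y : V ⊕ V) ∈ (A : Set V),
      (G.induce (A : Set V)).Reachable ⟨_, hx⟩ ⟨_, hy⟩ := by
  induction w with
  | nil => exact ⟨hx, Reachable.refl _⟩
  | @cons u z y h p ih =>
    have hadj : (corona G).Adj (u : V ⊕ V) (z : V ⊕ V) := h
    clear h
    obtain ⟨uv, hus⟩ := u
    obtain ⟨zv, hzs⟩ := z
    rcases uv with a | c
    · rcases zv with b | c
      · rw [corona_adj_inl_inl] at hadj
        have hzA : Sum.elim id id (Sum.inl b : V ⊕ V) ∈ (A : Set V) := hA b hzs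
        obtain ⟨hy, hr⟩ := ih hzA
        exact ⟨hy, Reachable.trans (Adj.reachable (by exact hadj)) hr⟩
      · rw [corona_adj_inl_inr] at hadj
        subst hadj
        have hzA : Sum.elim id id (Sum.inr a : V ⊕ V) ∈ (A : Set V) := hx
        obtain ⟨hy, hr⟩ := ih hzA
        exact ⟨hy, hr⟩
    · rw [corona_adj_inr] at hadj
      have hadj' : zv = Sum.inl c := hadj
      subst hadj'
      have hzA : Sum.elim id id (Sum.inl c : V ⊕ V) ∈ (A : Set V) := hx
      obtain ⟨hy, hr⟩ := ih hzA
      exact ⟨hy, hr⟩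

lemma singleton_inr_subtree (a : V) : IsSubtree (corona G) {Sum.inr a} := by
  haveI : Nonempty ↑(({Sum.inr a} : Finset (V ⊕ V)) : Set (V ⊕ V)) := ⟨⟨Sum.inr a, by simp⟩⟩
  refine ⟨⟨Sum.inr a, Finset.mem_singleton_self _⟩, ⟨?_⟩⟩
  intro u v
  have hu : (u : V ⊕ V) = Sum.inr a := by simpa using u.2
  have hv : (v : V ⊕ V) = Sum.inr a := by simpa using v.2
  rw [show u = v from Subtype.ext (hu.trans hv.symm)]

lemma emb_subtree {A B : Finset V} (hA : IsSubtree G A) (hBA : B ⊆ A) :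
    IsSubtree (corona G) (emb A B) := by
  obtain ⟨⟨a₀, ha₀⟩, hconn⟩ := hA
  have hmeml : ∀ a ∈ A, Sum.inl a ∈ ((emb A B : Finset (V ⊕ V)) : Set (V ⊕ V)) := by
    intro a ha; simpa using ha
  haveI : Nonempty ↑((emb A B : Finset (V ⊕ V)) : Set (V ⊕ V)) := ⟨⟨Sum.inl a₀, hmeml a₀ ha₀⟩⟩
  refine ⟨⟨Sum.inl a₀, mem_emb_inl.mpr ha₀⟩, ⟨?_⟩⟩
  -- the graph hom from induced A to induced emb A B
  let f : G.induce (A : Set V) →g (corona G).induce ((emb A B : Finset (V ⊕ V)) : Set (V ⊕ V)) :=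
    ⟨fun p => ⟨Sum.inl (p : V), hmeml _ p.2⟩, by
      intro p q hpq
      exact (corona_adj_inl_inl G _ _).mpr hpq⟩
  have key : ∀ u : ↑((emb A B : Finset (V ⊕ V)) : Set (V ⊕ V)),
      ∃ (a : V) (ha : a ∈ (A : Set V)),
        ((corona G).induce ((emb A B : Finset (V ⊕ V)) : Set (V ⊕ V))).Reachable u (f ⟨a, ha⟩) := by
    rintro ⟨uv, hus⟩
    rcases uv with a | b
    · have ha : a ∈ A := by simpa using hus
      exact ⟨a, ha, Reachable.refl _⟩
    · have hb : b ∈ B := by simpa using hus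
      have hbA : b ∈ A := hBA hb
      refine ⟨b, hbA, Adj.reachable ?_⟩
      exact (corona_adj_inr G _ _).mpr rfl
  intro u v
  obtain ⟨a, ha, hu⟩ := key u
  obtain ⟨b, hb, hv⟩ := key v
  exact hu.trans ((Reachable.map f (hconn.preconnected ⟨a, ha⟩ ⟨b, hb⟩)).trans hv.symm)

lemma subtree_corona_iff (s : Finset (V ⊕ V)) :
    IsSubtree (corona G) s ↔
      (∃ p : Finset V × Finset V, IsSubtree G p.1 ∧ p.2 ⊆ p.1 ∧ s = emb p.1 p.2) ∨
        ∃ a : V, s = {Sum.inr a} := by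
  constructor
  · rintro ⟨hne, hconn⟩
    by_cases hinl : ∃ a : V, Sum.inl a ∈ s
    · obtain ⟨a₀, ha₀⟩ := hinl
      left
      set A : Finset V := s.preimage Sum.inl (Sum.inl_injective.injOn) with hAdef
      set B : Finset V := s.preimage Sum.inr (Sum.inr_injective.injOn) with hBdef
      have hmemA : ∀ a : V, a ∈ A ↔ Sum.inl a ∈ s := fun a => Finset.mem_preimage
      have hmemB : ∀ b : V, b ∈ B ↔ Sum.inr b ∈ s := fun b => Finset.mem_preimage
      have hBsub : B ⊆ A := by
        intro b hb
        rw [hmemA]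
        refine inl_mem_of_reach G (Finset.mem_coe.mpr ((hmemB b).mp hb))
          (Finset.mem_coe.mpr ha₀)
          (hconn.preconnected _ _) (by simp)
      refine ⟨(A, B), ⟨⟨a₀, (hmemA a₀).mpr ha₀⟩, ?_⟩, hBsub, ?_⟩
      · haveI : Nonempty ↑(A : Set V) := ⟨⟨a₀, by exact_mod_cast (hmemA a₀).mpr ha₀⟩⟩
        refine ⟨?_⟩
        rintro ⟨a, ha⟩ ⟨b, hb⟩
        have has : Sum.inl a ∈ s := (hmemA a).mp (by exact_mod_cast ha)
        have hbs : Sum.inl b ∈ s := (hmemA b).mp (by exact_mod_cast hb)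
        obtain ⟨w⟩ := hconn.preconnected ⟨Sum.inl a, Finset.mem_coe.mpr has⟩
          ⟨Sum.inl b, Finset.mem_coe.mpr hbs⟩
        have hAmem : ∀ c : V, Sum.inl c ∈ s → c ∈ A := fun c hc => (hmemA c).mpr hc
        obtain ⟨hy, hr⟩ := reach_proj G hAmem w (by exact_mod_cast ha)
        exact hr
      · ext z
        rcases z with a | b
        · rw [mem_emb_inl, hmemA]
        · rw [mem_emb_inr, hmemB]
    · right
      push_neg at hinl
      obtain ⟨x, hx⟩ := hne
      rcases x with a | a
      · exact absurd hx (hinl a)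
      refine ⟨a, ?_⟩
      ext z
      simp only [Finset.mem_singleton]
      constructor
      · intro hz
        by_contra hne'
        exact hinl a (inl_mem_of_reach G (Finset.mem_coe.mpr hx) (Finset.mem_coe.mpr hz)
          (hconn.preconnected _ _) hne')
      · rintro rfl; exact hx
  · rintro (⟨⟨A, B⟩, hA, hBA, rfl⟩ | ⟨a, rfl⟩)
    · exact emb_subtree G hA hBA
    · exact singleton_inr_subtree G a

lemma neighborSet_corona_inr (a : V) :
    (corona G).neighborSet (Sum.inr a) = {Sum.inl a} := by
  ext z
  simp only [mem_neighborSet, Set.mem_singleton_iff]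
  exact corona_adj_inr G a z

lemma isLeaf_corona_iff [Fintype V] (hconn : G.Connected) (hcard : 2 ≤ Fintype.card V)
    (v : V ⊕ V) : IsLeaf (corona G) v ↔ ∃ a : V, v = Sum.inr a := by
  constructor
  · intro hv
    rcases v with a | a
    · exfalso
      -- a has a neighbor in G
      obtain ⟨b, hb⟩ : ∃ b : V, b ≠ a := Fintype.exists_ne_of_one_lt_card (by omega) a
      obtain ⟨w⟩ := hconn.preconnected a b
      obtain ⟨c, hc⟩ : ∃ c : V, G.Adj a c := by
        cases w with
        | nil => exact absurd rfl hb.symm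
        | cons h p => exact ⟨_, h⟩
      have hsub : ({Sum.inr a, Sum.inl c} : Set (V ⊕ V)) ⊆ (corona G).neighborSet (Sum.inl a) := by
        rintro z (rfl | rfl)
        · exact (corona_adj_inl_inr G a a).mpr rfl
        · exact (corona_adj_inl_inl G a c).mpr hc
      have h2 : 1 < ((corona G).neighborSet (Sum.inl a)).ncard := by
        refine lt_of_lt_of_le ?_ (Set.ncard_le_ncard hsub (Set.toFinite _))
        rw [Set.ncard_pair (by simp)]
        omega
      rw [IsLeaf] at hv
      omega
    · exact ⟨a, rfl⟩
  · rintro ⟨a, rfl⟩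
    rw [IsLeaf, neighborSet_corona_inr, Set.ncard_singleton]

lemma count_all [Fintype V] :
    {s : Finset (V ⊕ V) | IsSubtree (corona G) s}.ncard
      = (∑ᶠ s ∈ {s : Finset V | IsSubtree G s}, 2 ^ s.card) + Fintype.card V := by
  classical
  set ST : Finset (Finset V) := Finset.univ.filter (fun A => IsSubtree G A) with hST
  have hSTset : {s : Finset V | IsSubtree G s} = ↑ST := by ext A; simp [hST]
  rw [hSTset, finsum_mem_coe_finset]
  set P : Set (Finset V × Finset V) := {p | IsSubtree G p.1 ∧ p.2 ⊆ p.1} with hP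
  have hset : {s : Finset (V ⊕ V) | IsSubtree (corona G) s}
      = ((fun p : Finset V × Finset V => emb p.1 p.2) '' P)
        ∪ (Set.range (fun a : V => ({Sum.inr a} : Finset (V ⊕ V)))) := by
    ext s
    rw [Set.mem_setOf_eq, subtree_corona_iff]
    simp only [Set.mem_union, Set.mem_image, Set.mem_range, hP, Set.mem_setOf_eq]
    constructor
    · rintro (⟨p, h1, h2, rfl⟩ | ⟨a, rfl⟩)
      · exact Or.inl ⟨p, ⟨h1, h2⟩, rfl⟩
      · exact Or.inr ⟨a, rfl⟩
    · rintro (⟨p, ⟨h1, h2⟩, rfl⟩ | ⟨a, rfl⟩)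
      · exact Or.inl ⟨p, h1, h2, rfl⟩
      · exact Or.inr ⟨a, rfl⟩
  have hdisj : Disjoint ((fun p : Finset V × Finset V => emb p.1 p.2) '' P)
      (Set.range (fun a : V => ({Sum.inr a} : Finset (V ⊕ V)))) := by
    rw [Set.disjoint_left]
    rintro s ⟨⟨A, B⟩, ⟨⟨⟨a0, ha0⟩, -⟩, -⟩, rfl⟩ ⟨a, ha⟩
    have h1 : Sum.inl a0 ∈ emb A B := mem_emb_inl.mpr ha0
    have ha' : ({Sum.inr a} : Finset (V ⊕ V)) = emb A B := ha
    rw [← ha'] at h1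
    simp at h1
  rw [hset, Set.ncard_union_eq hdisj (Set.toFinite _) (Set.toFinite _)]
  congr 1
  · rw [Set.ncard_image_of_injective _ (emb_injective)]
    have hPfin : P = ↑(ST.biUnion (fun A => A.powerset.image (fun B => (A, B)))) := by
      ext p
      simp only [hP, Set.mem_setOf_eq, Finset.coe_biUnion, Set.mem_iUnion, Finset.mem_coe,
        Finset.mem_image, Finset.mem_powerset, hST, Finset.mem_filter, Finset.mem_univ, true_and]
      constructor
      · rintro ⟨h1, h2⟩; exact ⟨p.1, h1, p.2, h2, rfl⟩
      · rintro ⟨A, hA, B, hB, rfl⟩; exact ⟨hA, hB⟩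
    rw [hPfin, Set.ncard_coe_finset]
    rw [Finset.card_biUnion (by
      intro A hA A' hA' hne
      rw [Function.onFun, Finset.disjoint_left]
      rintro p hp hp'
      simp only [Finset.mem_image] at hp hp'
      obtain ⟨B, -, rfl⟩ := hp
      obtain ⟨B', -, h⟩ := hp'
      exact hne (congrArg Prod.fst h).symm)]
    refine Finset.sum_congr rfl fun A hA => ?_
    rw [Finset.card_image_of_injective _ (fun B B' h => by injection h)]
    exact Finset.card_powerset A
  · rw [← Set.image_univ, Set.ncard_image_of_injective _
      (fun a a' h => Sum.inr_injective (Finset.singleton_injective h)),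
      Set.ncard_univ, Nat.card_eq_fintype_card]

lemma count_leaf [Fintype V] (hconn : G.Connected) (hcard : 2 ≤ Fintype.card V) :
    {s : Finset (V ⊕ V) | IsSubtree (corona G) s ∧ ∃ v ∈ s, IsLeaf (corona G) v}.ncard
      = (∑ᶠ s ∈ {s : Finset V | IsSubtree G s}, (2 ^ s.card - 1)) + Fintype.card V := by
  classical
  set ST : Finset (Finset V) := Finset.univ.filter (fun A => IsSubtree G A) with hST
  have hSTset : {s : Finset V | IsSubtree G s} = ↑ST := by ext A; simp [hST]
  rw [hSTset, finsum_mem_coe_finset]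
  set P : Set (Finset V × Finset V) := {p | IsSubtree G p.1 ∧ p.2 ⊆ p.1 ∧ p.2.Nonempty} with hP
  have hset : {s : Finset (V ⊕ V) | IsSubtree (corona G) s ∧ ∃ v ∈ s, IsLeaf (corona G) v}
      = ((fun p : Finset V × Finset V => emb p.1 p.2) '' P)
        ∪ (Set.range (fun a : V => ({Sum.inr a} : Finset (V ⊕ V)))) := by
    ext s
    simp only [Set.mem_setOf_eq, Set.mem_union, Set.mem_image, Set.mem_range, hP]
    constructor
    · rintro ⟨hsub, v, hvs, hleaf⟩
      rcases (subtree_corona_iff G s).mp hsub with ⟨⟨A, B⟩, h1, h2, rfl⟩ | ⟨a, rfl⟩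
      · obtain ⟨b, rfl⟩ := (isLeaf_corona_iff G hconn hcard v).mp hleaf
        have hb : b ∈ B := mem_emb_inr.mp hvs
        exact Or.inl ⟨(A, B), ⟨h1, h2, ⟨b, hb⟩⟩, rfl⟩
      · exact Or.inr ⟨a, rfl⟩
    · rintro (⟨⟨A, B⟩, ⟨h1, h2, b, hb⟩, rfl⟩ | ⟨a, rfl⟩)
      · refine ⟨emb_subtree G h1 h2, Sum.inr b, mem_emb_inr.mpr hb, ?_⟩
        exact (isLeaf_corona_iff G hconn hcard _).mpr ⟨b, rfl⟩
      · refine ⟨singleton_inr_subtree G a, Sum.inr a, Finset.mem_singleton_self _, ?_⟩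
        exact (isLeaf_corona_iff G hconn hcard _).mpr ⟨a, rfl⟩
  have hdisj : Disjoint ((fun p : Finset V × Finset V => emb p.1 p.2) '' P)
      (Set.range (fun a : V => ({Sum.inr a} : Finset (V ⊕ V)))) := by
    rw [Set.disjoint_left]
    rintro s ⟨⟨A, B⟩, ⟨⟨⟨a0, ha0⟩, -⟩, -⟩, rfl⟩ ⟨a, ha⟩
    have h1 : Sum.inl a0 ∈ emb A B := mem_emb_inl.mpr ha0
    have ha' : ({Sum.inr a} : Finset (V ⊕ V)) = emb A B := ha
    rw [← ha'] at h1
    simp at h1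
  rw [hset, Set.ncard_union_eq hdisj (Set.toFinite _) (Set.toFinite _)]
  congr 1
  · rw [Set.ncard_image_of_injective _ (emb_injective)]
    have hPfin : P
        = ↑(ST.biUnion (fun A => (A.powerset.filter (fun B => B.Nonempty)).image
            (fun B => (A, B)))) := by
      ext p
      simp only [hP, Set.mem_setOf_eq, Finset.coe_biUnion, Set.mem_iUnion, Finset.mem_coe,
        Finset.mem_image, Finset.mem_filter, Finset.mem_powerset, hST, Finset.mem_univ, true_and]
      constructor
      · rintro ⟨h1, h2, h3⟩; exact ⟨p.1, h1, p.2, ⟨h2, h3⟩, rfl⟩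
      · rintro ⟨A, hA, B, ⟨hB, hBne⟩, rfl⟩; exact ⟨hA, hB, hBne⟩
    rw [hPfin, Set.ncard_coe_finset]
    rw [Finset.card_biUnion (by
      intro A hA A' hA' hne
      rw [Function.onFun, Finset.disjoint_left]
      rintro p hp hp'
      simp only [Finset.mem_image] at hp hp'
      obtain ⟨B, -, rfl⟩ := hp
      obtain ⟨B', -, h⟩ := hp'
      exact hne (congrArg Prod.fst h).symm)]
    refine Finset.sum_congr rfl fun A hA => ?_
    rw [Finset.card_image_of_injective _ (fun B B' h => by injection h)]
    have : A.powerset.filter (fun B => B.Nonempty) = A.powerset.erase ∅ := by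
      ext B
      simp [Finset.nonempty_iff_ne_empty, and_comm]
    rw [this, Finset.card_erase_of_mem (Finset.empty_mem_powerset A), Finset.card_powerset]
  · rw [← Set.image_univ, Set.ncard_image_of_injective _
      (fun a a' h => Sum.inr_injective (Finset.singleton_injective h)),
      Set.ncard_univ, Nat.card_eq_fintype_card]

end CoronaAux

/-- For every tree `T` on `n ≥ 2` vertices,
`F(T∘K₁) = Σ_S 2^{|S|} + n` and `F*(T∘K₁) = Σ_S (2^{|S|} - 1) + n`, where the sums range
over all subtrees `S` of `T`. -/
theorem corona_counts {V : Type} [Fintype V] (n : ℕ) (hn : 2 ≤ n)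
    (G : SimpleGraph V) (hG : G.IsTree) (hcard : Fintype.card V = n) :
    numSubtrees (corona G) =
        (∑ᶠ s ∈ {s : Finset V | IsSubtree G s}, 2 ^ s.card) + n ∧
      numLeafSubtrees (corona G) =
        (∑ᶠ s ∈ {s : Finset V | IsSubtree G s}, (2 ^ s.card - 1)) + n := by
  constructor
  · rw [numSubtrees, count_all G, hcard]
  · rw [numLeafSubtrees, count_leaf G hG.isConnected (by omega), hcard]
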